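/- arXiv:2204.07295 — 6 statements merged into one kernel-verified Lean document; each statement's English description precedes it below -/
import Mathlib

section
/- Let s > 0 and let x, y ∈ ℝ² with y ≠ x and |y − (x − s e₂)| > s, where e₂ = (0,1). Then e^{−τ/(2s)} |v_τ(y;x)| → 0 as τ → ∞. -/
/-- The Kelvin-transformed complex geometrical optics solution
`v_τ(y;x) = exp(−iτ/((y₁−x₁)+i(y₂−x₂)))`. -/
noncomputable def vtau (τ : ℝ) (x y : ℝ × ℝ) : ℂ :=
  Complex.exp (-(Complex.I * (τ : ℂ)) / (((y.1 - x.1 : ℝ) : ℂ) + Complex.I * ((y.2 - x.2 : ℝ) : ℂ)))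

theorem stmt1 (s : ℝ) (hs : 0 < s) (x y : ℝ × ℝ) (hxy : y ≠ x)
    (h : s < Real.sqrt ((y.1 - x.1) ^ 2 + (y.2 - x.2 + s) ^ 2)) :
    Filter.Tendsto (fun τ : ℝ => Real.exp (-τ / (2 * s)) * ‖vtau τ x y‖)
      Filter.atTop (nhds 0) := by
  set a : ℝ := y.1 - x.1 with ha
  set b : ℝ := y.2 - x.2 with hb
  have hab : a ≠ 0 ∨ b ≠ 0 := by
    by_contra hcon
    push_neg at hcon
    apply hxy
    have h1 : y.1 = x.1 := by have := hcon.1; simp [ha] at this; linarith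
    have h2 : y.2 = x.2 := by have := hcon.2; simp [hb] at this; linarith
    exact Prod.ext h1 h2
  have hr2 : 0 < a ^ 2 + b ^ 2 := by
    rcases hab with h1 | h1 <;> positivity
  have hsq : s ^ 2 < a ^ 2 + (b + s) ^ 2 := by
    rwa [Real.lt_sqrt hs.le] at h
  set c : ℝ := 1 / (2 * s) + b / (a ^ 2 + b ^ 2) with hc
  have hcpos : 0 < c := by
    have hnum : 0 < (a ^ 2 + b ^ 2) + 2 * b * s := by nlinarith
    have : c = ((a ^ 2 + b ^ 2) + 2 * b * s) / (2 * s * (a ^ 2 + b ^ 2)) := by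
      rw [hc]; field_simp
    rw [this]
    exact div_pos hnum (by positivity)
  have hden : ((a : ℂ) + Complex.I * (b : ℂ)) ≠ 0 := by
    intro hz
    rcases hab with h1 | h1
    · apply h1
      have := congrArg Complex.re hz
      simpa using this
    · apply h1
      have := congrArg Complex.im hz
      simpa using this
  have key : ∀ τ : ℝ, Real.exp (-τ / (2 * s)) * ‖vtau τ x y‖
      = Real.exp (-c * τ) := by
    intro τ
    have hre : (-(Complex.I * (τ : ℂ)) / ((a : ℂ) + Complex.I * (b : ℂ))).re
        = -(τ * b) / (a ^ 2 + b ^ 2) := by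
      rw [Complex.div_re]
      simp [Complex.normSq_apply]
      ring
    rw [vtau, Complex.norm_exp, ← ha, ← hb, hre, ← Real.exp_add]
    congr 1
    rw [hc]; field_simp
    ring
  simp only [key]
  have : Filter.Tendsto (fun τ : ℝ => -c * τ) Filter.atTop Filter.atBot := by
    apply Filter.Tendsto.const_mul_atTop_of_neg (by linarith : -c < 0) Filter.tendsto_id
  exact Real.tendsto_exp_atBot.comp this
end

section
/- Let s > 0 and let x, y ∈ ℝ² with |y − (x − s e₂)| < s, where e₂ = (0,1) (this forces y ≠ x). Then e^{−τ/(2s)} |v_τ(y;x)| → ∞ as τ → ∞. -/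
theorem stmt2 (s : ℝ) (hs : 0 < s) (x y : ℝ × ℝ)
    (h : Real.sqrt ((y.1 - x.1) ^ 2 + (y.2 - x.2 + s) ^ 2) < s) :
    Filter.Tendsto (fun τ : ℝ => Real.exp (-τ / (2 * s)) * ‖vtau τ x y‖)
      Filter.atTop Filter.atTop := by
  set a := y.1 - x.1 with ha
  set b := y.2 - x.2 with hb
  have hsq : a ^ 2 + (b + s) ^ 2 < s ^ 2 := by
    have := (Real.sqrt_lt' hs).mp h
    simpa [ha, hb] using this
  have hr : a ^ 2 + b ^ 2 + 2 * b * s < 0 := by nlinarith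
  have hrpos : 0 < a ^ 2 + b ^ 2 := by
    rcases eq_or_lt_of_le (by positivity : (0:ℝ) ≤ a ^ 2 + b ^ 2) with h0 | h0
    · exfalso
      have ha0 : a = 0 := by nlinarith [sq_nonneg a, sq_nonneg b]
      have hb0 : b = 0 := by nlinarith [sq_nonneg a, sq_nonneg b]
      rw [ha0, hb0] at hr; nlinarith
    · exact h0
  have hc : 0 < -b / (a ^ 2 + b ^ 2) - 1 / (2 * s) := by
    rw [sub_pos, div_lt_div_iff₀ (by linarith) hrpos]
    nlinarith
  set c := -b / (a ^ 2 + b ^ 2) - 1 / (2 * s) with hcdef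
  have habs : ∀ τ : ℝ, Real.exp (-τ / (2 * s)) * ‖vtau τ x y‖
      = Real.exp (c * τ) := by
    intro τ
    rw [vtau, Complex.norm_exp, ← Real.exp_add]
    congr 1
    have hre : ((-(Complex.I * (τ : ℂ)) /
        (((a : ℝ) : ℂ) + Complex.I * ((b : ℝ) : ℂ))).re) = -τ * b / (a ^ 2 + b ^ 2) := by
      rw [Complex.div_re]
      simp [Complex.normSq_apply]
      ring
    rw [hre]
    rw [hcdef]
    field_simp [hcdef]
    ring
  simp only [habs]
  exact Real.tendsto_exp_atTop.comp (Filter.Tendsto.const_mul_atTop hc Filter.tendsto_id)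
end

section
/- Let s > 0 and let x, y ∈ ℝ² with y ≠ x and |y − (x − s e₂)| = s, where e₂ = (0,1). Then for every τ > 0, |e^{−τ/(2s)} v_τ(y;x)| = 1; equivalently, the ℂ²-valued field satisfies ‖e^{−τ/(2s)} (v_τ(y;x), i v_τ(y;x))‖ = √2 for all τ > 0. -/
theorem stmt3 (s : ℝ) (hs : 0 < s) (x y : ℝ × ℝ) (hxy : y ≠ x)
    (h : Real.sqrt ((y.1 - x.1) ^ 2 + (y.2 - x.2 + s) ^ 2) = s) :
    ∀ τ : ℝ, 0 < τ →
      ‖(((Real.exp (-τ / (2 * s)) : ℝ) * vtau τ x y : ℂ))‖ = 1 ∧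
      Real.sqrt (‖(((Real.exp (-τ / (2 * s)) : ℝ) * vtau τ x y : ℂ))‖ ^ 2
          + ‖(((Real.exp (-τ / (2 * s)) : ℝ) * (Complex.I * vtau τ x y) : ℂ))‖ ^ 2)
        = Real.sqrt 2 := by
  intro τ hτ
  have hne : (y.1 - x.1) ≠ 0 ∨ (y.2 - x.2) ≠ 0 := by
    by_contra hc
    push_neg at hc
    exact hxy (Prod.ext (by linarith [hc.1]) (by linarith [hc.2]))
  set a : ℝ := y.1 - x.1 with ha
  set b : ℝ := y.2 - x.2 with hb
  clear_value a b
  have hsq : a ^ 2 + (b + s) ^ 2 = s ^ 2 := by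
    have := congrArg (· ^ 2) h
    simpa [Real.sq_sqrt (by positivity : (0:ℝ) ≤ a ^ 2 + (b + s) ^ 2)] using this
  have hab : a ^ 2 + b ^ 2 = -(2 * s * b) := by linear_combination hsq
  have habpos : 0 < a ^ 2 + b ^ 2 := by
    rcases hne with h1 | h1 <;> positivity
  have hbneg : b < 0 := by nlinarith
  have hre : (-(Complex.I * (τ : ℂ)) / (((a : ℝ) : ℂ) + Complex.I * ((b : ℝ) : ℂ))).re
      = τ / (2 * s) := by
    rw [Complex.div_re]
    simp [Complex.normSq_apply]
    rw [show a * a + b * b = -(2 * s * b) by nlinarith]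
    field_simp [hbneg.ne, hs.ne']
  have hv : ‖vtau τ x y‖ = Real.exp (τ / (2 * s)) := by
    rw [vtau, Complex.norm_exp, ← ha, ← hb, hre]
  have h1 : ‖(((Real.exp (-τ / (2 * s)) : ℝ) * vtau τ x y : ℂ))‖ = 1 := by
    rw [norm_mul, hv, Complex.norm_real, Real.norm_eq_abs, abs_of_pos (Real.exp_pos _), ← Real.exp_add]
    rw [show -τ / (2 * s) + τ / (2 * s) = 0 by ring, Real.exp_zero]
  refine ⟨h1, ?_⟩
  have h2 : ‖(((Real.exp (-τ / (2 * s)) : ℝ) * (Complex.I * vtau τ x y) : ℂ))‖ = 1 := by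
    rw [norm_mul, norm_mul, Complex.norm_I, one_mul, ← norm_mul]
    exact h1
  rw [h1, h2]
  norm_num
end

section
/- Fix x ∈ ℝ², τ > 0, and let 𝐯_τ(y;x) := (v_τ(y;x), i·v_τ(y;x)). Then for every y ≠ x, σ(𝐯_τ(·;x))(y) e₂ = 2μτ w² 𝐯_τ(y;x), where w := ((y₂−x₂) + i(y₁−x₁))/|y−x|² (which equals the bilinear dot product of (y−x)/|y−x|² with e₂ + i e₁, with e₁ = (1,0), e₂ = (0,1)). -/
/-- Partial derivative with respect to the first variable. -/
noncomputable def pd1 (f : ℝ × ℝ → ℂ) (p : ℝ × ℝ) : ℂ := fderiv ℝ f p (1, 0)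

/-- Partial derivative with respect to the second variable. -/
noncomputable def pd2 (f : ℝ × ℝ → ℂ) (p : ℝ × ℝ) : ℂ := fderiv ℝ f p (0, 1)

/-- The second column `σ(u) e₂ = (σ₁₂, σ₂₂)` of the stress tensor
`σ(u) = λ tr(ε(u)) I + 2μ ε(u)`, `ε(u) = (∇u + (∇u)ᵀ)/2`, of a field `u : ℝ² → ℂ²`. -/
noncomputable def sigmaE2 (lam μ : ℝ) (u : ℝ × ℝ → ℂ × ℂ) (y : ℝ × ℝ) : ℂ × ℂ :=
  ((μ : ℂ) * (pd1 (fun z => (u z).2) y + pd2 (fun z => (u z).1) y),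
   (lam : ℂ) * (pd1 (fun z => (u z).1) y + pd2 (fun z => (u z).2) y)
     + 2 * (μ : ℂ) * pd2 (fun z => (u z).2) y)

/-- `w = ((y₂−x₂) + i(y₁−x₁))/|y−x|²`, the dot product of `(y−x)/|y−x|²` with `e₂ + i e₁`. -/
noncomputable def wfun (x y : ℝ × ℝ) : ℂ :=
  (((y.2 - x.2 : ℝ) : ℂ) + Complex.I * ((y.1 - x.1 : ℝ) : ℂ))
    / (((y.1 - x.1) ^ 2 + (y.2 - x.2) ^ 2 : ℝ) : ℂ)

/-- The real-linear map `(a, b) ↦ a + b i`. -/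
noncomputable def ee : (ℝ × ℝ) →L[ℝ] ℂ :=
  (Complex.equivRealProdCLM.symm : (ℝ × ℝ) ≃L[ℝ] ℂ)

lemma ee_apply (p : ℝ × ℝ) : ee p = (p.1 : ℂ) + (p.2 : ℂ) * Complex.I := by
  have : ee p = Complex.equivRealProd.symm p := rfl
  rw [this, Complex.equivRealProd_symm_apply]

lemma vtau_eq (τ : ℝ) (x z : ℝ × ℝ) :
    vtau τ x z = Complex.exp (-(Complex.I * (τ : ℂ)) / (ee z - ee x)) := by
  unfold vtau
  congr 1
  rw [ee_apply, ee_apply]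
  push_cast
  ring

lemma vtau_hasFDerivAt (τ : ℝ) (x z : ℝ × ℝ) (hz : ee z ≠ ee x) :
    HasFDerivAt (vtau τ x)
      ((vtau τ x z * (Complex.I * (τ : ℂ) / (ee z - ee x) ^ 2)) • ee) z := by
  have hne : ee z - ee x ≠ 0 := sub_ne_zero.mpr hz
  have h1 : HasDerivAt (fun w : ℂ => -(Complex.I * (τ : ℂ)) / (w - ee x))
      (Complex.I * (τ : ℂ) / (ee z - ee x) ^ 2) (ee z) := by
    have h := (hasDerivAt_const (ee z) (-(Complex.I * (τ : ℂ)))).div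
      ((hasDerivAt_id (ee z)).sub_const (ee x)) hne
    have e : (0 * (id (ee z) - ee x) - -(Complex.I * (τ : ℂ)) * 1) / (id (ee z) - ee x) ^ 2
        = Complex.I * (τ : ℂ) / (ee z - ee x) ^ 2 := by simp
    rw [e] at h
    exact h
  have h2 := h1.cexp
  have h3 := h2.comp_hasFDerivAt z (ee.hasFDerivAt (x := z))
  have hfun : (fun w : ℂ => Complex.exp (-(Complex.I * (τ : ℂ)) / (w - ee x))) ∘ ee
      = vtau τ x := by
    funext w
    simp only [Function.comp_apply]
    rw [vtau_eq]
  rw [vtau_eq]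
  simpa [hfun] using h3

theorem stmt5 (x : ℝ × ℝ) (τ : ℝ) (hτ : 0 < τ) (lam μ : ℝ) (hμ : 0 < μ) (hlm : 0 < lam + μ)
    (y : ℝ × ℝ) (hxy : y ≠ x) :
    sigmaE2 lam μ (fun z => ((vtau τ x z, Complex.I * vtau τ x z) : ℂ × ℂ)) y
      = (2 * (μ : ℂ) * (τ : ℂ) * (wfun x y) ^ 2 * vtau τ x y,
         2 * (μ : ℂ) * (τ : ℂ) * (wfun x y) ^ 2 * (Complex.I * vtau τ x y)) := by
  set d1 : ℝ := y.1 - x.1 with hd1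
  set d2 : ℝ := y.2 - x.2 with hd2
  have hd : d1 ≠ 0 ∨ d2 ≠ 0 := by
    by_contra h
    push_neg at h
    apply hxy
    have h1 : y.1 = x.1 := by have := h.1; simp [hd1, sub_eq_zero] at this; exact this
    have h2 : y.2 = x.2 := by have := h.2; simp [hd2, sub_eq_zero] at this; exact this
    exact Prod.ext h1 h2
  have hζeq : ee y - ee x = (d1 : ℂ) + Complex.I * (d2 : ℂ) := by
    rw [ee_apply, ee_apply]; push_cast [hd1, hd2]; ring
  have hζ : ee y - ee x ≠ 0 := by
    rw [hζeq]
    intro h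
    rw [Complex.ext_iff] at h
    simp at h
    rcases hd with h1 | h1
    · exact h1 h.1
    · exact h1 h.2
  have hee : ee y ≠ ee x := by
    intro h; exact hζ (by rw [h]; ring)
  have hr : ((d1 ^ 2 + d2 ^ 2 : ℝ) : ℂ) ≠ 0 := by
    have : (0:ℝ) < d1 ^ 2 + d2 ^ 2 := by
      rcases hd with h1 | h1
      · positivity
      · positivity
    exact_mod_cast this.ne'
  set ζ : ℂ := ee y - ee x with hζdef
  set V : ℂ := vtau τ x y with hV
  set c : ℂ := V * (Complex.I * (τ : ℂ) / ζ ^ 2) with hc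
  have hF : HasFDerivAt (vtau τ x) (c • ee) y := vtau_hasFDerivAt τ x y hee
  have hFc : HasFDerivAt (fun z => Complex.I * vtau τ x z) ((Complex.I * c) • ee) y := by
    have := hF.const_mul Complex.I
    rw [smul_smul] at this
    exact this
  have he1 : ee (1, 0) = 1 := by rw [ee_apply]; simp
  have he2 : ee (0, 1) = Complex.I := by rw [ee_apply]; simp
  have hp1v : pd1 (vtau τ x) y = c := by
    rw [pd1, hF.fderiv]; simp [he1]
  have hp2v : pd2 (vtau τ x) y = c * Complex.I := by
    rw [pd2, hF.fderiv]; simp [he2]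
  have hp1iv : pd1 (fun z => Complex.I * vtau τ x z) y = Complex.I * c := by
    rw [pd1, hFc.fderiv]; simp [he1]
  have hp2iv : pd2 (fun z => Complex.I * vtau τ x z) y = Complex.I * c * Complex.I := by
    rw [pd2, hFc.fderiv]; simp [he2]
  have hζ' : (d1 : ℂ) + Complex.I * (d2 : ℂ) ≠ 0 := by rw [← hζeq]; exact hζ
  have hw2 : wfun x y ^ 2 = -1 / ((d1 : ℂ) + Complex.I * (d2 : ℂ)) ^ 2 := by
    unfold wfun
    rw [← hd1, ← hd2, div_pow, div_eq_div_iff (pow_ne_zero _ hr) (pow_ne_zero _ hζ')]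
    push_cast
    linear_combination (((d1:ℂ)^2 + (d2:ℂ)^2) ^ 2 + 2 * Complex.I * ((d1:ℂ)^2 + (d2:ℂ)^2) * d1 * d2
      + (d1:ℂ)^2 * (d2:ℂ)^2 * (1 + Complex.I ^ 2)) * Complex.I_sq
  unfold sigmaE2
  simp only [hp1v, hp2v, hp1iv, hp2iv, hw2, Prod.mk.injEq]
  rw [hc, hζeq]
  constructor
  · field_simp
    linear_combination (2 * (μ:ℂ) * τ * V) * Complex.I_sq
  · field_simp
    linear_combination (V * τ * ((lam:ℂ) + 2 * μ)) * Complex.I_sq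
end

section
/- Fix x ∈ ℝ², y ≠ x, and let 𝐯_τ(y;x) := (v_τ(y;x), i·v_τ(y;x)). The derivative of 𝐯_τ(y;x) with respect to τ is 𝐯'_τ(y;x) = (−i/((y₁−x₁)+i(y₂−x₂))) 𝐯_τ(y;x), and its stress satisfies σ(𝐯'_τ(·;x))(y) e₂ = 2μ (1 − τ w) w² 𝐯_τ(y;x), where w := ((y₂−x₂) + i(y₁−x₁))/|y−x|² and e₂ = (0,1). -/
section aux

/-- the ℝ-linear map (a,b) ↦ a + i b -/
noncomputable def Lzeta : (ℝ × ℝ) →L[ℝ] ℂ :=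
  Complex.ofRealCLM.comp (ContinuousLinearMap.fst ℝ ℝ ℝ)
    + Complex.I • Complex.ofRealCLM.comp (ContinuousLinearMap.snd ℝ ℝ ℝ)

lemma Lzeta_apply (v : ℝ × ℝ) : Lzeta v = (v.1 : ℂ) + Complex.I * (v.2 : ℂ) := by
  simp [Lzeta, ContinuousLinearMap.add_apply, ContinuousLinearMap.smul_apply, smul_eq_mul]

lemma hasFDerivAt_zeta (x z : ℝ × ℝ) :
    HasFDerivAt (fun z : ℝ × ℝ => (((z.1 - x.1 : ℝ) : ℂ) + Complex.I * ((z.2 - x.2 : ℝ) : ℂ)))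
      Lzeta z := by
  have := (Lzeta.hasFDerivAt (x := z)).add_const (-(x.1 : ℂ) - Complex.I * (x.2 : ℂ))
  refine this.congr_of_eventuallyEq (Filter.Eventually.of_forall fun z => ?_)
  beta_reduce
  rw [Lzeta_apply]
  push_cast
  ring

/-- derivative of `F w = (-i/w) * exp(-(iτ)/w)` at `w ≠ 0`. -/
lemma hasDerivAt_F (τ : ℝ) {w : ℂ} (hw : w ≠ 0) :
    HasDerivAt (fun w : ℂ => -Complex.I / w * Complex.exp (-(Complex.I * (τ : ℂ)) / w))
      (Complex.exp (-(Complex.I * (τ : ℂ)) / w) * ((τ : ℂ) / w ^ 3 + Complex.I / w ^ 2)) w := by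
  have hinv : HasDerivAt (fun w : ℂ => w⁻¹) (-(w ^ 2)⁻¹) w := hasDerivAt_inv hw
  have h1 : HasDerivAt (fun w : ℂ => -Complex.I * w⁻¹) (-Complex.I * -(w ^ 2)⁻¹) w :=
    hinv.const_mul _
  have h2 : HasDerivAt (fun w : ℂ => -(Complex.I * (τ : ℂ)) * w⁻¹)
      (-(Complex.I * (τ : ℂ)) * -(w ^ 2)⁻¹) w := hinv.const_mul _
  have h3 := h2.cexp
  have h4 := h1.mul h3
  have he : ∀ v : ℂ, -Complex.I / v = -Complex.I * v⁻¹ := fun v => div_eq_mul_inv _ _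
  have he2 : ∀ v : ℂ, -(Complex.I * (τ : ℂ)) / v = -(Complex.I * (τ : ℂ)) * v⁻¹ :=
    fun v => div_eq_mul_inv _ _
  simp only [← he, ← he2] at h4
  refine h4.congr_deriv ?_
  symm
  field_simp
  ring_nf
  rw [Complex.I_sq]
  ring

lemma sigma_comp1 (τ μ : ℝ) (c E : ℂ) (hc : c ≠ 0) :
    (μ:ℂ) * (Complex.I * (E * ((τ : ℂ) / c ^ 3 + Complex.I / c ^ 2))
      + Complex.I * (E * ((τ : ℂ) / c ^ 3 + Complex.I / c ^ 2)))
    = 2 * (μ:ℂ) * (1 - (τ:ℂ) * (Complex.I / c)) * (Complex.I / c) ^ 2 * E := by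
  field_simp
  ring_nf
  rw [Complex.I_sq]
  ring_nf

lemma sigma_comp2 (τ lam μ : ℝ) (c E : ℂ) (hc : c ≠ 0) :
    (lam:ℂ) * ((E * ((τ : ℂ) / c ^ 3 + Complex.I / c ^ 2))
      + Complex.I * (Complex.I * (E * ((τ : ℂ) / c ^ 3 + Complex.I / c ^ 2))))
      + 2 * (μ:ℂ) * (Complex.I * (Complex.I * (E * ((τ : ℂ) / c ^ 3 + Complex.I / c ^ 2))))
    = 2 * (μ:ℂ) * (1 - (τ:ℂ) * (Complex.I / c)) * (Complex.I / c) ^ 2 * (Complex.I * E) := by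
  have hI3 : Complex.I ^ 3 = -Complex.I := by rw [pow_succ, Complex.I_sq]; ring
  field_simp
  ring_nf
  rw [hI3, Complex.I_sq]
  ring_nf
  rw [Complex.I_pow_four]
  ring
end aux

theorem stmt6 (x y : ℝ × ℝ) (hxy : y ≠ x) (lam μ : ℝ) (hμ : 0 < μ) (hlm : 0 < lam + μ) :
    ∀ τ : ℝ, 0 < τ →
      -- the τ-derivative of 𝐯_τ(y;x) is (−i/((y₁−x₁)+i(y₂−x₂))) 𝐯_τ(y;x)
      HasDerivAt (fun t : ℝ => ((vtau t x y, Complex.I * vtau t x y) : ℂ × ℂ))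
        ((-Complex.I / (((y.1 - x.1 : ℝ) : ℂ) + Complex.I * ((y.2 - x.2 : ℝ) : ℂ)))
          • ((vtau τ x y, Complex.I * vtau τ x y) : ℂ × ℂ)) τ ∧
      -- and the stress of the field 𝐯'_τ(·;x) satisfies σ(𝐯'_τ(·;x))(y) e₂ = 2μ(1−τw)w²𝐯_τ(y;x)
      sigmaE2 lam μ (fun z =>
          (-Complex.I / (((z.1 - x.1 : ℝ) : ℂ) + Complex.I * ((z.2 - x.2 : ℝ) : ℂ)))
            • ((vtau τ x z, Complex.I * vtau τ x z) : ℂ × ℂ)) y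
        = (2 * (μ : ℂ) * (1 - (τ : ℂ) * wfun x y) * (wfun x y) ^ 2 * vtau τ x y,
           2 * (μ : ℂ) * (1 - (τ : ℂ) * wfun x y) * (wfun x y) ^ 2
             * (Complex.I * vtau τ x y)) := by
  intro τ hτ
  -- basic notation
  set c : ℂ := ((y.1 - x.1 : ℝ) : ℂ) + Complex.I * ((y.2 - x.2 : ℝ) : ℂ) with hc_def
  have hc : c ≠ 0 := by
    intro h
    apply hxy
    have h1 : (y.1 - x.1 : ℝ) = 0 ∧ (y.2 - x.2 : ℝ) = 0 := by
      have hre := congrArg Complex.re h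
      have him := congrArg Complex.im h
      simp [hc_def] at hre him
      exact ⟨hre, him⟩
    have := h1.1; have := h1.2
    ext <;> linarith [h1.1, h1.2]
  constructor
  · -- derivative in τ
    have h1 : HasDerivAt (fun t : ℝ => vtau t x y) (-Complex.I / c * vtau τ x y) τ := by
      have hb : HasDerivAt (fun t : ℝ => ((t : ℂ) * (-Complex.I / c)))
          (1 * (-Complex.I / c)) τ := ((hasDerivAt_id τ).ofReal_comp).mul_const _
      have := hb.cexp
      have hfun : (fun t : ℝ => vtau t x y)
          = fun t : ℝ => Complex.exp ((t : ℂ) * (-Complex.I / c)) := by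
        funext t
        simp only [vtau, ← hc_def]
        rw [show -(Complex.I * (t : ℂ)) / c = (t : ℂ) * (-Complex.I / c) by ring]
      rw [hfun]
      convert this using 1
      simp only [vtau, ← hc_def]
      rw [show -(Complex.I * (τ : ℂ)) / c = (τ : ℂ) * (-Complex.I / c) by ring]
      ring
    have h2 : HasDerivAt (fun t : ℝ => Complex.I * vtau t x y)
        (Complex.I * (-Complex.I / c * vtau τ x y)) τ := h1.const_mul _
    have := h1.prodMk h2
    refine this.congr_deriv ?_
    symm
    simp [Prod.smul_mk, smul_eq_mul]
    ring
  · -- the stress computation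
    -- component functions
    set E : ℂ := Complex.exp (-(Complex.I * (τ : ℂ)) / c) with hE_def
    have hEv : vtau τ x y = E := rfl
    set f' : ℂ := E * ((τ : ℂ) / c ^ 3 + Complex.I / c ^ 2) with hf'_def
    set ζ : ℝ × ℝ → ℂ :=
      fun z => (((z.1 - x.1 : ℝ) : ℂ) + Complex.I * ((z.2 - x.2 : ℝ) : ℂ)) with hζ_def
    have hζy : ζ y = c := rfl
    set u : ℝ × ℝ → ℂ × ℂ := fun z =>
      (-Complex.I / ζ z) • ((vtau τ x z, Complex.I * vtau τ x z) : ℂ × ℂ) with hu_def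
    have hu1 : (fun z => (u z).1)
        = (fun w : ℂ => -Complex.I / w * Complex.exp (-(Complex.I * (τ : ℂ)) / w)) ∘ ζ := by
      funext z
      simp [hu_def, vtau, Function.comp, smul_eq_mul, hζ_def]
    have hu2 : (fun z => (u z).2) = fun z =>
        Complex.I * ((fun w : ℂ => -Complex.I / w
          * Complex.exp (-(Complex.I * (τ : ℂ)) / w)) ∘ ζ) z := by
      funext z
      simp [hu_def, vtau, Function.comp, smul_eq_mul, hζ_def]
      ring
    have hcomp : HasFDerivAt
        ((fun w : ℂ => -Complex.I / w * Complex.exp (-(Complex.I * (τ : ℂ)) / w)) ∘ ζ)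
        (f' • Lzeta) y := by
      have hF := hasDerivAt_F τ (w := c) hc
      exact hF.comp_hasFDerivAt y (hasFDerivAt_zeta x y)
    have hpd1u1 : pd1 (fun z => (u z).1) y = f' := by
      rw [hu1, pd1, hcomp.fderiv]
      simp [Lzeta_apply, smul_eq_mul]
    have hpd2u1 : pd2 (fun z => (u z).1) y = Complex.I * f' := by
      rw [hu1, pd2, hcomp.fderiv]
      simp [Lzeta_apply, smul_eq_mul]
      ring
    have hcomp2 : HasFDerivAt (fun z => (u z).2) ((Complex.I * f') • Lzeta) y := by
      rw [hu2]
      have := hcomp.const_smul Complex.I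
      refine this.congr_fderiv ?_
      rw [smul_smul]
    have hpd1u2 : pd1 (fun z => (u z).2) y = Complex.I * f' := by
      rw [pd1, hcomp2.fderiv]
      simp [Lzeta_apply, smul_eq_mul]
    have hpd2u2 : pd2 (fun z => (u z).2) y = Complex.I * (Complex.I * f') := by
      rw [pd2, hcomp2.fderiv]
      simp [Lzeta_apply, smul_eq_mul]
      ring
    -- value of w
    have hsq : ((y.1 - x.1) ^ 2 + (y.2 - x.2) ^ 2 : ℝ) ≠ 0 := by
      intro h
      apply hxy
      have h1 : (y.1 - x.1 : ℝ) = 0 := by nlinarith [sq_nonneg (y.1 - x.1), sq_nonneg (y.2 - x.2)]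
      have h2 : (y.2 - x.2 : ℝ) = 0 := by nlinarith [sq_nonneg (y.1 - x.1), sq_nonneg (y.2 - x.2)]
      ext <;> linarith
    have hw : wfun x y = Complex.I / c := by
      rw [wfun, hc_def]
      have hsqC : (((y.1 - x.1) ^ 2 + (y.2 - x.2) ^ 2 : ℝ) : ℂ) ≠ 0 := by
        exact_mod_cast hsq
      rw [div_eq_div_iff hsqC hc, hc_def]
      push_cast
      linear_combination (((y.1:ℂ) - (x.1:ℂ)) * ((y.2:ℂ) - (x.2:ℂ))) * Complex.I_sq
    -- finish
    rw [sigmaE2, hpd1u1, hpd2u1, hpd1u2, hpd2u2, hw, hEv, hf'_def, Prod.mk.injEq]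
    exact ⟨sigma_comp1 τ μ c E hc, sigma_comp2 τ lam μ c E hc⟩
end

section
/- Let s, δ, d, R > 0 with d ≤ R, and x ∈ ℝ². Then for every τ > 0 and every y ∈ ℝ² with |y − (x − s e₂)| ≥ s + δ and d ≤ |y − x| ≤ R (e₂ = (0,1)), one has e^{−τ/(2s)} ‖σ(𝐯_τ(·;x))(y) e₂‖ ≤ (2√2 μ/d²) · τ · exp(−τ δ(2s+δ)/(2sR²)), where 𝐯_τ(y;x) := (v_τ(y;x), i v_τ(y;x)). In particular, e^{−τ/(2s)} ‖σ(𝐯_τ(·;x))(y) e₂‖ decays exponentially as τ → ∞, uniformly on such y. -/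
lemma vtau_hasFDerivAt_s16 (τ : ℝ) (x y : ℝ × ℝ)
    (hζ : (((y.1 - x.1 : ℝ) : ℂ) + Complex.I * ((y.2 - x.2 : ℝ) : ℂ)) ≠ 0) :
    HasFDerivAt (vtau τ x)
      ((Complex.I * (τ:ℂ) / ((((y.1 - x.1 : ℝ) : ℂ) + Complex.I * ((y.2 - x.2 : ℝ) : ℂ)))^2
          * vtau τ x y) •
        (Complex.equivRealProdCLM.symm : (ℝ × ℝ) →L[ℝ] ℂ)) y := by
  set ζ : ℂ := (((y.1 - x.1 : ℝ) : ℂ) + Complex.I * ((y.2 - x.2 : ℝ) : ℂ)) with hζdef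
  have hφ : HasFDerivAt (fun z : ℝ × ℝ => (((z.1 - x.1 : ℝ) : ℂ) + Complex.I * ((z.2 - x.2 : ℝ) : ℂ)))
      (Complex.equivRealProdCLM.symm : (ℝ × ℝ) →L[ℝ] ℂ) y := by
    have h1 := (Complex.equivRealProdCLM.symm.hasFDerivAt (x := y)).sub_const
      ((x.1 : ℂ) + Complex.I * (x.2 : ℂ))
    have heq : (fun z : ℝ × ℝ => (((z.1 - x.1 : ℝ) : ℂ) + Complex.I * ((z.2 - x.2 : ℝ) : ℂ)))
        = fun z : ℝ × ℝ => Complex.equivRealProdCLM.symm z - ((x.1 : ℂ) + Complex.I * (x.2 : ℂ)) := by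
      funext z
      simp only [Complex.equivRealProdCLM_symm_apply]
      push_cast
      ring
    rw [heq]
    exact h1
  have hinv : HasDerivAt (fun w : ℂ => -(Complex.I * (τ:ℂ)) / w)
      (Complex.I * (τ:ℂ) / ζ^2) ζ := by
    have h := (hasDerivAt_inv hζ).const_mul (-(Complex.I * (τ:ℂ)))
    have heq : -(Complex.I * (τ:ℂ)) * (-(ζ^2)⁻¹) = Complex.I * (τ:ℂ) / ζ^2 := by
      field_simp
    rw [heq] at h
    have e : (fun w : ℂ => -(Complex.I * (τ:ℂ)) / w) = fun y => -(Complex.I * (τ:ℂ)) * y⁻¹ := by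
      funext w; ring
    rw [e]; exact h
  have hF := hinv.cexp
  have comp := hF.comp_hasFDerivAt y hφ
  have : vtau τ x = (fun w : ℂ => Complex.exp (-(Complex.I * (τ:ℂ)) / w)) ∘
      (fun z : ℝ × ℝ => (((z.1 - x.1 : ℝ) : ℂ) + Complex.I * ((z.2 - x.2 : ℝ) : ℂ))) := rfl
  rw [this]
  refine comp.congr_fderiv ?_
  congr 1
  simp only [Function.comp_apply]
  rw [← hζdef]
  ring

lemma vtau_diff (τ : ℝ) (x y : ℝ × ℝ)
    (hζ : (((y.1 - x.1 : ℝ) : ℂ) + Complex.I * ((y.2 - x.2 : ℝ) : ℂ)) ≠ 0) :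
    DifferentiableAt ℝ (vtau τ x) y := (vtau_hasFDerivAt_s16 τ x y hζ).differentiableAt

lemma pd1_vtau (τ : ℝ) (x y : ℝ × ℝ)
    (hζ : (((y.1 - x.1 : ℝ) : ℂ) + Complex.I * ((y.2 - x.2 : ℝ) : ℂ)) ≠ 0) :
    pd1 (vtau τ x) y = Complex.I * (τ:ℂ) / ((((y.1 - x.1 : ℝ) : ℂ) + Complex.I * ((y.2 - x.2 : ℝ) : ℂ)))^2
      * vtau τ x y := by
  rw [pd1, (vtau_hasFDerivAt_s16 τ x y hζ).fderiv]
  simp [Complex.equivRealProdCLM_symm_apply]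

lemma pd2_vtau (τ : ℝ) (x y : ℝ × ℝ)
    (hζ : (((y.1 - x.1 : ℝ) : ℂ) + Complex.I * ((y.2 - x.2 : ℝ) : ℂ)) ≠ 0) :
    pd2 (vtau τ x) y = Complex.I * (Complex.I * (τ:ℂ) / ((((y.1 - x.1 : ℝ) : ℂ) + Complex.I * ((y.2 - x.2 : ℝ) : ℂ)))^2
      * vtau τ x y) := by
  rw [pd2, (vtau_hasFDerivAt_s16 τ x y hζ).fderiv]
  simp [Complex.equivRealProdCLM_symm_apply]
  ring

theorem stmt16 (lam μ s δ d R : ℝ) (hμ : 0 < μ) (hlm : 0 < lam + μ)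
    (hs : 0 < s) (hδ : 0 < δ) (hd : 0 < d) (hR : 0 < R) (hdR : d ≤ R) (x : ℝ × ℝ) :
    ∀ τ : ℝ, 0 < τ → ∀ y : ℝ × ℝ,
      s + δ ≤ Real.sqrt ((y.1 - x.1) ^ 2 + (y.2 - x.2 + s) ^ 2) →
      d ≤ Real.sqrt ((y.1 - x.1) ^ 2 + (y.2 - x.2) ^ 2) →
      Real.sqrt ((y.1 - x.1) ^ 2 + (y.2 - x.2) ^ 2) ≤ R →
      Real.exp (-τ / (2 * s)) *
          Real.sqrt
            (‖(sigmaE2 lam μ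
                (fun z => ((vtau τ x z, Complex.I * vtau τ x z) : ℂ × ℂ)) y).1‖ ^ 2
              + ‖(sigmaE2 lam μ
                (fun z => ((vtau τ x z, Complex.I * vtau τ x z) : ℂ × ℂ)) y).2‖ ^ 2)
        ≤ (2 * Real.sqrt 2 * μ / d ^ 2) * τ * Real.exp (-τ * δ * (2 * s + δ) / (2 * s * R ^ 2)) := by
  intro τ hτ y h1 h2 h3
  set a : ℝ := y.1 - x.1 with ha
  set b : ℝ := y.2 - x.2 with hb
  -- basic size facts
  have hd2 : d ^ 2 ≤ a ^ 2 + b ^ 2 := by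
    have := pow_le_pow_left₀ hd.le h2 2
    rwa [Real.sq_sqrt (by positivity)] at this
  have hR2 : a ^ 2 + b ^ 2 ≤ R ^ 2 := by
    have := pow_le_pow_left₀ (Real.sqrt_nonneg _) h3 2
    rwa [Real.sq_sqrt (by positivity)] at this
  have h1sq : (s + δ) ^ 2 ≤ a ^ 2 + (b + s) ^ 2 := by
    have := pow_le_pow_left₀ (by positivity) h1 2
    rwa [Real.sq_sqrt (by positivity)] at this
  have hr2pos : 0 < a ^ 2 + b ^ 2 := lt_of_lt_of_le (by positivity) hd2
  set ζ : ℂ := ((a : ℂ) + Complex.I * (b : ℂ)) with hζdef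
  have hζre : ζ.re = a := by simp [hζdef]
  have hζim : ζ.im = b := by simp [hζdef]
  have hζ : ζ ≠ 0 := by
    intro h
    have ha0 : a = 0 := by rw [← hζre, h]; simp
    have hb0 : b = 0 := by rw [← hζim, h]; simp
    rw [ha0, hb0] at hr2pos; norm_num at hr2pos
  set w : ℂ := Complex.I * (τ:ℂ) / ζ^2 * vtau τ x y with hwdef
  -- partial derivatives
  have hp1 : pd1 (vtau τ x) y = w := pd1_vtau τ x y hζ
  have hp2 : pd2 (vtau τ x) y = Complex.I * w := pd2_vtau τ x y hζ
  have hdiff : DifferentiableAt ℝ (vtau τ x) y := vtau_diff τ x y hζ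
  have hp1' : pd1 (fun z => Complex.I * vtau τ x z) y = Complex.I * w := by
    rw [pd1, fderiv_const_mul hdiff Complex.I]
    simp only [ContinuousLinearMap.smul_apply, smul_eq_mul]
    rw [← pd1, hp1]
  have hp2' : pd2 (fun z => Complex.I * vtau τ x z) y = Complex.I * (Complex.I * w) := by
    rw [pd2, fderiv_const_mul hdiff Complex.I]
    simp only [ContinuousLinearMap.smul_apply, smul_eq_mul]
    rw [← pd2, hp2]
  -- the stress column
  have hσ : sigmaE2 lam μ (fun z => ((vtau τ x z, Complex.I * vtau τ x z) : ℂ × ℂ)) y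
      = (2 * (μ:ℂ) * Complex.I * w, -(2 * (μ:ℂ) * w)) := by
    unfold sigmaE2
    have e1 : (fun z : ℝ × ℝ => ((vtau τ x z, Complex.I * vtau τ x z) : ℂ × ℂ).1) = vtau τ x := rfl
    have e2 : (fun z : ℝ × ℝ => ((vtau τ x z, Complex.I * vtau τ x z) : ℂ × ℂ).2)
        = fun z => Complex.I * vtau τ x z := rfl
    rw [e1, e2, hp1, hp2, hp1', hp2']
    refine Prod.ext ?_ ?_
    · simp only
      ring
    · simp only
      linear_combination ((lam:ℂ) + 2 * (μ:ℂ)) * w * Complex.I_mul_I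
  -- |w|
  have hnsq : Complex.normSq ζ = a ^ 2 + b ^ 2 := by
    rw [Complex.normSq_apply, hζre, hζim]; ring
  have habsv : ‖vtau τ x y‖ = Real.exp (-(τ * b) / (a ^ 2 + b ^ 2)) := by
    have : vtau τ x y = Complex.exp (-(Complex.I * (τ:ℂ)) / ζ) := rfl
    rw [this, Complex.norm_exp]
    congr 1
    rw [Complex.div_re, hnsq, hζre, hζim]
    simp
  have habsw : ‖w‖ = τ / (a ^ 2 + b ^ 2) * Real.exp (-(τ * b) / (a ^ 2 + b ^ 2)) := by
    rw [hwdef, norm_mul, norm_div, norm_mul, norm_pow, Complex.norm_I, Complex.norm_real,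
      Real.norm_of_nonneg hτ.le, Complex.sq_norm, hnsq, habsv, one_mul]
  -- norm of the stress column
  have habs1 : ‖2 * (μ:ℂ) * Complex.I * w‖ = 2 * μ * ‖w‖ := by
    rw [norm_mul, norm_mul, norm_mul, Complex.norm_I, Complex.norm_real, Real.norm_of_nonneg hμ.le]
    simp [mul_comm]
  have habs2 : ‖-(2 * (μ:ℂ) * w)‖ = 2 * μ * ‖w‖ := by
    rw [norm_neg, norm_mul, norm_mul, Complex.norm_real, Real.norm_of_nonneg hμ.le]
    norm_num
  have hsqrt : Real.sqrt ((2 * μ * ‖w‖) ^ 2 + (2 * μ * ‖w‖) ^ 2)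
      = Real.sqrt 2 * (2 * μ * ‖w‖) := by
    rw [show (2 * μ * ‖w‖) ^ 2 + (2 * μ * ‖w‖) ^ 2
        = 2 * (2 * μ * ‖w‖) ^ 2 by ring,
      Real.sqrt_mul (by norm_num), Real.sqrt_sq (by positivity)]
  rw [hσ]
  simp only
  rw [habs1, habs2, hsqrt, habsw]
  clear hσ hp1 hp2 hp1' hp2' hdiff habsv habs1 habs2 hsqrt habsw hnsq hζre hζim hζ hwdef hζdef
  clear_value a b
  clear w ζ
  -- exponent inequality
  have hbkey : δ * (2 * s + δ) - (a ^ 2 + b ^ 2) ≤ 2 * s * b := by nlinarith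
  have key : τ * δ * (2 * s + δ) / (2 * s * R ^ 2) ≤ τ / (2 * s) + τ * b / (a ^ 2 + b ^ 2) := by
    have h4 : τ * δ * (2 * s + δ) / (2 * s * R ^ 2) ≤ τ * δ * (2 * s + δ) / (2 * s * (a ^ 2 + b ^ 2)) := by
      gcongr
    have h5 : τ * δ * (2 * s + δ) / (2 * s * (a ^ 2 + b ^ 2)) ≤ τ / (2 * s) + τ * b / (a ^ 2 + b ^ 2) := by
      have e : τ / (2 * s) + τ * b / (a ^ 2 + b ^ 2)
          = (τ * (a ^ 2 + b ^ 2) + τ * b * (2 * s)) / (2 * s * (a ^ 2 + b ^ 2)) := by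
        field_simp
      rw [e, div_le_div_iff_of_pos_right (by positivity)]
      nlinarith [mul_le_mul_of_nonneg_left hbkey hτ.le]
    linarith
  have hexp : Real.exp (-τ / (2 * s) + -(τ * b) / (a ^ 2 + b ^ 2))
      ≤ Real.exp (-τ * δ * (2 * s + δ) / (2 * s * R ^ 2)) := by
    apply Real.exp_le_exp.mpr
    have e1 : -τ / (2 * s) + -(τ * b) / (a ^ 2 + b ^ 2) = -(τ / (2 * s) + τ * b / (a ^ 2 + b ^ 2)) := by
      ring
    have e2 : -τ * δ * (2 * s + δ) / (2 * s * R ^ 2) = -(τ * δ * (2 * s + δ) / (2 * s * R ^ 2)) := by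
      ring
    rw [e1, e2]
    linarith
  calc Real.exp (-τ / (2 * s)) *
        (Real.sqrt 2 * (2 * μ * (τ / (a ^ 2 + b ^ 2) * Real.exp (-(τ * b) / (a ^ 2 + b ^ 2)))))
      = (2 * Real.sqrt 2 * μ) * (τ / (a ^ 2 + b ^ 2))
          * Real.exp (-τ / (2 * s) + -(τ * b) / (a ^ 2 + b ^ 2)) := by
        rw [Real.exp_add]; ring
    _ ≤ (2 * Real.sqrt 2 * μ) * (τ / d ^ 2)
          * Real.exp (-τ * δ * (2 * s + δ) / (2 * s * R ^ 2)) := by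
        have h2s : Real.sqrt 2 ≥ 0 := Real.sqrt_nonneg 2
        gcongr
        all_goals first | exact hexp | exact hd2 | positivity | linarith
    _ = (2 * Real.sqrt 2 * μ / d ^ 2) * τ * Real.exp (-τ * δ * (2 * s + δ) / (2 * s * R ^ 2)) := by
        ring
end
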